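/- Define ψ₁(s, r) = 2r²/(3s⁴) + 1/(3rs) and recursively ψ_{k+1}(s, r) = ∫_s^r ψ_k(y, r) ψ₁(s, y) dy for 0 < s ≤ r. Then for each k ≥ 1, ψ_k(s, r) is a polynomial in 1/s (with coefficients depending on r) whose coefficient of s^{-(k+3)} equals 2r²/((k−1)!(k+2)). -/

import Mathlib

set_option maxHeartbeats 1600000 in
theorem stmt_14 (r : ℝ) (hr : 0 < r) (ψ : ℕ → ℝ → ℝ → ℝ)
    (hbase : ∀ s r', ψ 1 s r' = 2 * r' ^ 2 / (3 * s ^ 4) + 1 / (3 * r' * s))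
    (hrec : ∀ k, 1 ≤ k → ∀ s r', ψ (k + 1) s r' = ∫ y in s..r', ψ k y r' * ψ 1 s y) :
    ∀ k, 1 ≤ k → ∃ a : ℕ → ℝ,
      (∀ s ∈ Set.Ioc (0 : ℝ) r,
        ψ k s r = ∑ j ∈ Finset.range (k + 4), a j * s ^ (-(j : ℤ)))
      ∧ a (k + 3) = 2 * r ^ 2 / (((k - 1).factorial : ℝ) * ((k : ℝ) + 2)) := by
  have hr0 : r ≠ 0 := ne_of_gt hr
  have key : ∀ k, 1 ≤ k → ∃ a : ℕ → ℝ,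
      (∀ s ∈ Set.Ioc (0 : ℝ) r,
        ψ k s r = ∑ j ∈ Finset.range (k + 4), a j * s ^ (-(j : ℤ)))
      ∧ a 0 = 0 ∧ a 2 = 0 ∧ a 3 = 0
      ∧ a (k + 3) = 2 * r ^ 2 / (((k - 1).factorial : ℝ) * ((k : ℝ) + 2)) := by
    intro k hk
    induction k, hk using Nat.le_induction with
    | base =>
      refine ⟨fun j => if j = 4 then 2 * r ^ 2 / 3 else if j = 1 then 1 / (3 * r) else 0,
        ?_, by norm_num, by norm_num, by norm_num, by norm_num⟩
      rintro s ⟨hs0, hsr⟩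
      have hs : s ≠ 0 := ne_of_gt hs0
      rw [hbase]
      simp only [Finset.sum_range_succ, Finset.sum_range_zero, zpow_neg, zpow_natCast]
      norm_num
      field_simp
      ring
    | succ k hk ih =>
      obtain ⟨a, ha, ha0, ha2, ha3, hatop⟩ := ih
      set c : ℕ → ℝ := fun j => 1 / (3 * (j : ℝ)) - 2 / (3 * (3 - (j : ℝ))) with hc
      set P : ℝ := (2 / 3) * ∑ j ∈ Finset.range (k + 4), a j * r ^ ((3 : ℤ) - j) / (3 - (j : ℝ)) with hP
      set Q : ℝ := (-1 / 3) * ∑ j ∈ Finset.range (k + 4), a j * r ^ (-(j : ℤ)) / (j : ℝ) with hQ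
      refine ⟨fun i => if i = 0 then 0 else if i = 1 then Q else if i = 4 then P
        else c (i - 1) * a (i - 1), ?_, by norm_num, ?_, ?_, ?_⟩
      · rintro s ⟨hs0, hsr⟩
        have hs : s ≠ 0 := ne_of_gt hs0
        have h0m : (0 : ℝ) ∉ Set.uIcc s r := Set.notMem_uIcc_of_lt hs0 hr
        have hint : ∀ j ∈ Finset.range (k + 4), IntervalIntegrable
            (fun y => a j * (2 / (3 * s ^ 4)) * y ^ ((2 : ℤ) - j)
              + a j * (1 / (3 * s)) * y ^ (-1 - (j : ℤ)))
            MeasureTheory.volume s r := by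
          intro j _
          exact ((intervalIntegral.intervalIntegrable_zpow (Or.inr h0m)).const_mul _).add
            ((intervalIntegral.intervalIntegrable_zpow (Or.inr h0m)).const_mul _)
        have hcong : (∫ y in s..r, ψ k y r * ψ 1 s y)
            = ∫ y in s..r, ∑ j ∈ Finset.range (k + 4),
              (a j * (2 / (3 * s ^ 4)) * y ^ ((2 : ℤ) - j)
                + a j * (1 / (3 * s)) * y ^ (-1 - (j : ℤ))) := by
          apply intervalIntegral.integral_congr
          intro y hy
          dsimp only
          rw [Set.uIcc_of_le hsr] at hy
          have hy0 : 0 < y := lt_of_lt_of_le hs0 hy.1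
          have hyne : y ≠ 0 := ne_of_gt hy0
          rw [ha y ⟨hy0, hy.2⟩, hbase, Finset.sum_mul]
          refine Finset.sum_congr rfl fun j hj => ?_
          have e1 : y ^ ((2 : ℤ) - j) = y ^ 2 / y ^ j := by
            rw [zpow_sub₀ hyne, zpow_natCast]; norm_cast
          have e2 : y ^ (-1 - (j : ℤ)) = 1 / (y * y ^ j) := by
            rw [zpow_sub₀ hyne, zpow_natCast, zpow_neg_one]
            rw [div_eq_div_iff (by positivity) (by positivity)]
            field_simp
          have e3 : y ^ (-(j : ℤ)) = 1 / y ^ j := by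
            rw [zpow_neg, zpow_natCast, one_div]
          rw [e1, e2, e3]
          have hyj : y ^ j ≠ 0 := pow_ne_zero _ hyne
          field_simp
        rw [hrec k hk s r, hcong, intervalIntegral.integral_finset_sum hint]
        have hTj : ∀ j ∈ Finset.range (k + 4),
            (∫ y in s..r, (a j * (2 / (3 * s ^ 4)) * y ^ ((2 : ℤ) - j)
              + a j * (1 / (3 * s)) * y ^ (-1 - (j : ℤ))))
            = (2 / 3 * (a j * r ^ ((3 : ℤ) - j) / (3 - (j : ℝ)))) * s ^ (-4 : ℤ)
              + (-1 / 3 * (a j * r ^ (-(j : ℤ)) / (j : ℝ))) * s ^ (-1 : ℤ)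
              + c j * a j * s ^ (-((j : ℤ) + 1)) := by
          intro j hj
          by_cases hj0 : j = 0
          · subst hj0; simp [ha0]
          by_cases hj3 : j = 3
          · subst hj3; simp [ha3]
          have hn1 : ((2 : ℤ) - j) ≠ -1 := by omega
          have hn2 : ((-1 : ℤ) - j) ≠ -1 := by omega
          rw [intervalIntegral.integral_add
              ((intervalIntegral.intervalIntegrable_zpow (Or.inr h0m)).const_mul _)
              ((intervalIntegral.intervalIntegrable_zpow (Or.inr h0m)).const_mul _),
            intervalIntegral.integral_const_mul, intervalIntegral.integral_const_mul,
            integral_zpow (Or.inr ⟨hn1, h0m⟩), integral_zpow (Or.inr ⟨hn2, h0m⟩)]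
          have e1 : (2 : ℤ) - j + 1 = 3 - j := by ring
          have e2 : (-1 : ℤ) - j + 1 = -j := by ring
          rw [e1, e2]
          have hjR : (j : ℝ) ≠ 0 := Nat.cast_ne_zero.mpr hj0
          have hj3R : (3 : ℝ) - (j : ℝ) ≠ 0 := by
            have : (j : ℝ) ≠ 3 := by exact_mod_cast hj3
            intro h; apply this; linarith
          have f1 : ∀ x : ℝ, x ≠ 0 → x ^ ((3 : ℤ) - j) = x ^ 3 / x ^ j := by
            intro x hx; rw [zpow_sub₀ hx, zpow_natCast]; norm_cast
          have f2 : ∀ x : ℝ, x ≠ 0 → x ^ (-(j : ℤ)) = 1 / x ^ j := by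
            intro x hx; rw [zpow_neg, zpow_natCast, one_div]
          have f3 : s ^ (-((j : ℤ) + 1)) = 1 / (s * s ^ j) := by
            rw [zpow_neg, ← Nat.cast_add_one, zpow_natCast, pow_succ, one_div, mul_comm]
          have f4 : s ^ (-4 : ℤ) = 1 / s ^ 4 := by
            rw [zpow_neg, one_div]; norm_cast
          have f5 : s ^ (-1 : ℤ) = 1 / s := by
            rw [zpow_neg_one, one_div]
          rw [f1 r hr0, f1 s hs, f2 r hr0, f2 s hs, f3, f4, f5]
          have hc1 : ((3 : ℤ) - (j : ℤ) : ℤ) ≠ 0 := by omega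
          have hc2 : (-(j : ℤ) : ℤ) ≠ 0 := by omega
          push_cast
          have hsj : s ^ j ≠ 0 := pow_ne_zero _ hs
          have hrj : r ^ j ≠ 0 := pow_ne_zero _ hr0
          have g1 : (2 : ℝ) - (j : ℝ) + 1 = 3 - (j : ℝ) := by ring
          have g2 : (-1 : ℝ) - (j : ℝ) + 1 = -(j : ℝ) := by ring
          rw [g1, g2]
          simp only [hc]
          revert hsj hrj hjR hj3R
          generalize r ^ j = R
          generalize s ^ j = S
          generalize hw : (3 : ℝ) - (j : ℝ) = w
          generalize (j : ℝ) = x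
          intro hsj hrj hjR hj3R
          field_simp
          ring
        rw [Finset.sum_congr rfl hTj]
        have hb : ∀ j ∈ Finset.range (k + 4),
            (if j + 1 = 0 then (0:ℝ) else if j + 1 = 1 then Q else if j + 1 = 4 then P
              else c (j + 1 - 1) * a (j + 1 - 1)) * s ^ (-((j + 1 : ℕ) : ℤ))
            = c j * a j * s ^ (-((j : ℤ) + 1))
              + (if j = 0 then Q * s ^ (-1 : ℤ) else 0)
              + (if j = 3 then P * s ^ (-4 : ℤ) else 0) := by
          intro j hj
          have hcast : (-((j + 1 : ℕ) : ℤ)) = -((j : ℤ) + 1) := by push_cast; ring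
          rw [hcast]
          by_cases hj0 : j = 0
          · subst hj0; norm_num [ha0]
          by_cases hj3 : j = 3
          · subst hj3; norm_num [ha3]
          have h1 : ¬ (j + 1 = 1) := by omega
          have h4 : ¬ (j + 1 = 4) := by omega
          simp [h1, h4, hj0, hj3]
        have hsplit : (∑ i ∈ Finset.range (k + 1 + 4),
              (if i = 0 then (0:ℝ) else if i = 1 then Q else if i = 4 then P
                else c (i - 1) * a (i - 1)) * s ^ (-(i : ℤ)))
            = ∑ j ∈ Finset.range (k + 4),
              (c j * a j * s ^ (-((j : ℤ) + 1))
                + (if j = 0 then Q * s ^ (-1 : ℤ) else 0)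
                + (if j = 3 then P * s ^ (-4 : ℤ) else 0)) := by
          rw [show k + 1 + 4 = (k + 4) + 1 by omega, Finset.sum_range_succ',
            Finset.sum_congr rfl hb]
          norm_num
        rw [hsplit, Finset.sum_add_distrib, Finset.sum_add_distrib,
          Finset.sum_add_distrib, Finset.sum_add_distrib,
          Finset.sum_ite_eq' (Finset.range (k + 4)) 0 (fun _ => Q * s ^ (-1 : ℤ)),
          Finset.sum_ite_eq' (Finset.range (k + 4)) 3 (fun _ => P * s ^ (-4 : ℤ))]
        have h0mem : (0 : ℕ) ∈ Finset.range (k + 4) := by simp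
        have h3mem : (3 : ℕ) ∈ Finset.range (k + 4) := by
          simp only [Finset.mem_range]; omega
        rw [if_pos h0mem, if_pos h3mem]
        have hA : (∑ j ∈ Finset.range (k + 4),
              (2 / 3 * (a j * r ^ ((3 : ℤ) - j) / (3 - (j : ℝ)))) * s ^ (-4 : ℤ))
            = P * s ^ (-4 : ℤ) := by
          rw [hP, ← Finset.sum_mul, Finset.mul_sum]
        have hB : (∑ j ∈ Finset.range (k + 4),
              (-1 / 3 * (a j * r ^ (-(j : ℤ)) / (j : ℝ))) * s ^ (-1 : ℤ))
            = Q * s ^ (-1 : ℤ) := by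
          rw [hQ, ← Finset.sum_mul, Finset.mul_sum]
        rw [hA, hB]
        ring
      · -- b 2 = c 1 * a 1 = 0
        norm_num [hc]
      · -- b 3 = c 2 * a 2 = 0
        norm_num [hc, ha2]
      · -- top coefficient
        have h4 : ¬ (k + 1 + 3 = 4) := by omega
        simp only [show k+1+3 = k+4 from rfl]
        norm_num [show ¬ (k + 4 = 1) by omega, show ¬ (k+4 = 4) by omega, hc, hatop]
        obtain ⟨m, rfl⟩ := Nat.exists_eq_add_of_le hk
        have hf : (1 + m).factorial = (m + 1) * m.factorial := by
          rw [Nat.add_comm]; exact Nat.factorial_succ m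
        have hm1 : 1 + m - 1 = m := by omega
        rw [hm1, hf]
        have h1 : (m : ℝ) + 1 ≠ 0 := by positivity
        have h2 : (m.factorial : ℝ) ≠ 0 := Nat.cast_ne_zero.mpr m.factorial_ne_zero
        push_cast
        simp only [show ¬ (1 + m = 0) by omega, if_false]
        field_simp
        ring
  intro k hk
  obtain ⟨a, ha, _, _, _, htop⟩ := key k hk
  exact ⟨a, ha, htop⟩
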